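/- Let a, b > 1 with log_b a = p/q, p, q > 1 coprime, β = b^p, ψ ∈ L²((0,∞)) with Θ_β-transform matrix Ψ. Let (r', s') ∈ {1,...,q−1} × {1,...,p−1} be the unique pair with pr' + qs' = pq + 1, and define L_q(ξ) = [[0, I_{q−r'}],[e^{2πiξ} I_{r'}, 0]] and R_p(ξ) = [[0, I_{s'}],[e^{−2πiξ} I_{p−s'}, 0]]. Then Ψ(a^{1/p} x, ξ) = a^{−1/(2p)} L_q(ξ) Ψ(x, ξ) R_p(ξ) for a.e. (x, ξ) ∈ (0,∞) × ℝ. -/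

import Mathlib

open Set MeasureTheory Complex

/-- The `Θ_β`-transform: `Θ_β f (x, ξ) = ∑_{l ∈ ℤ} β^{l/2} f(β^l x) e^{-2πilξ}`. -/
noncomputable def thetaTransform (β : ℝ) (f : ℝ → ℂ) (x ξ : ℝ) : ℂ :=
  ∑' l : ℤ, (Real.sqrt (β ^ l) : ℂ) * f (β ^ l * x) *
    Complex.exp (-(2 * Real.pi * Complex.I * (l : ℂ) * (ξ : ℂ)))

/-- The `Θ_β`-transform matrix `Ψ(x,ξ) = (a^{r/2} b^{s/2} Θ_β ψ(a^r b^s x, ξ))_{r,s}`. -/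
noncomputable def psiMatrix (a b β : ℝ) (p q : ℕ) (ψ : ℝ → ℂ) (x ξ : ℝ) :
    Matrix (Fin q) (Fin p) ℂ :=
  fun r s => (Real.sqrt (a ^ (r : ℕ) * b ^ (s : ℕ)) : ℂ) *
    thetaTransform β ψ (a ^ (r : ℕ) * b ^ (s : ℕ) * x) ξ

/-- `L_q(ξ) = [[0, I_{q-r'}], [e^{2πiξ} I_{r'}, 0]]`. -/
noncomputable def Lmat (q r' : ℕ) (ξ : ℝ) : Matrix (Fin q) (Fin q) ℂ :=
  fun i j =>
    if (i : ℕ) < q - r' then (if (j : ℕ) = (i : ℕ) + r' then 1 else 0)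
    else (if (j : ℕ) + (q - r') = (i : ℕ) then
      Complex.exp (2 * Real.pi * Complex.I * (ξ : ℂ)) else 0)

/-- `R_p(ξ) = [[0, I_{s'}], [e^{-2πiξ} I_{p-s'}, 0]]`. -/
noncomputable def Rmat (p s' : ℕ) (ξ : ℝ) : Matrix (Fin p) (Fin p) ℂ :=
  fun i j =>
    if (i : ℕ) < s' then (if (j : ℕ) = (i : ℕ) + (p - s') then 1 else 0)
    else (if (j : ℕ) + s' = (i : ℕ) then
      Complex.exp (-(2 * Real.pi * Complex.I * (ξ : ℂ))) else 0)

private lemma theta_shift (β : ℝ) (hβ : 0 < β) (ψ : ℝ → ℂ) (y ξ : ℝ) (k : ℤ) :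
    thetaTransform β ψ (β ^ k * y) ξ
      = ((Real.sqrt (β ^ k) : ℂ))⁻¹ * Complex.exp (2 * Real.pi * Complex.I * (k : ℂ) * (ξ : ℂ)) *
        thetaTransform β ψ y ξ := by
  unfold thetaTransform
  rw [← tsum_mul_left]
  rw [← (Equiv.addRight k).tsum_eq (fun l : ℤ =>
    ((Real.sqrt (β ^ k) : ℂ))⁻¹ * Complex.exp (2 * Real.pi * Complex.I * (k : ℂ) * (ξ : ℂ)) *
      ((Real.sqrt (β ^ l) : ℂ) * ψ (β ^ l * y) *
        Complex.exp (-(2 * Real.pi * Complex.I * (l : ℂ) * (ξ : ℂ)))))]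
  refine tsum_congr fun l => ?_
  have h1 : β ^ (Equiv.addRight k l) = β ^ l * β ^ k := by
    simp [Equiv.addRight]; rw [zpow_add₀ hβ.ne']
  have h2 : β ^ l * (β ^ k * y) = β ^ (Equiv.addRight k l) * y := by rw [h1]; ring
  have hs : Real.sqrt (β ^ l * β ^ k) = Real.sqrt (β ^ l) * Real.sqrt (β ^ k) :=
    Real.sqrt_mul (zpow_pos hβ l).le _
  have hk0 : (Real.sqrt (β ^ k) : ℂ) ≠ 0 := by
    simpa using (Real.sqrt_pos.2 (zpow_pos hβ k)).ne'
  rw [h2, h1, hs]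
  have hcast : ((Equiv.addRight k l : ℤ) : ℂ) = (l : ℂ) + (k : ℂ) := by
    simp [Equiv.addRight]
  rw [hcast]
  have hexp : Complex.exp (2 * Real.pi * Complex.I * (k : ℂ) * (ξ : ℂ)) *
      Complex.exp (-(2 * Real.pi * Complex.I * ((l : ℂ) + (k : ℂ)) * (ξ : ℂ)))
      = Complex.exp (-(2 * Real.pi * Complex.I * (l : ℂ) * (ξ : ℂ))) := by
    rw [← Complex.exp_add]; ring_nf
  push_cast
  field_simp
  rw [← hexp]
  ring

private lemma Lmul {q r' : ℕ} (h1 : 1 ≤ r') (h2 : r' ≤ q - 1) (hq : 1 < q) (ξ : ℝ) {n : ℕ}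
    (M : Matrix (Fin q) (Fin n) ℂ) (r : Fin q) (s : Fin n) :
    (Lmat q r' ξ * M) r s =
      if h : (r : ℕ) + r' < q then M ⟨(r : ℕ) + r', h⟩ s
      else Complex.exp (2 * Real.pi * Complex.I * (ξ : ℂ)) *
        M ⟨(r : ℕ) + r' - q, by omega⟩ s := by
  rw [Matrix.mul_apply]
  split_ifs with h
  · rw [Finset.sum_eq_single (⟨(r : ℕ) + r', h⟩ : Fin q)]
    · have : (r : ℕ) < q - r' := by omega
      simp [Lmat, this]
    · intro i _ hi
      have hi' : (i : ℕ) ≠ (r : ℕ) + r' := fun hc => hi (Fin.ext hc)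
      have : (r : ℕ) < q - r' := by omega
      simp [Lmat, this, hi']
    · simp
  · have hr : (r : ℕ) + r' - q < q := by omega
    rw [Finset.sum_eq_single (⟨(r : ℕ) + r' - q, hr⟩ : Fin q)]
    · have h3 : ¬ ((r : ℕ) < q - r') := by omega
      have h4 : (r : ℕ) + r' - q + (q - r') = (r : ℕ) := by omega
      simp only [Lmat, h3, if_false, h4, if_true]
    · intro i _ hi
      have hi' : (i : ℕ) ≠ (r : ℕ) + r' - q := fun hc => hi (Fin.ext hc)
      have h3 : ¬ ((r : ℕ) < q - r') := by omega
      have h4 : (i : ℕ) + (q - r') ≠ (r : ℕ) := by omega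
      simp [Lmat, h3, h4]
    · simp

private lemma mulR {p s' : ℕ} (h1 : 1 ≤ s') (h2 : s' ≤ p - 1) (hp : 1 < p) (ξ : ℝ) {n : ℕ}
    (M : Matrix (Fin n) (Fin p) ℂ) (r : Fin n) (s : Fin p) :
    (M * Rmat p s' ξ) r s =
      if h : (s : ℕ) + s' < p then
        Complex.exp (-(2 * Real.pi * Complex.I * (ξ : ℂ))) * M r ⟨(s : ℕ) + s', h⟩
      else M r ⟨(s : ℕ) + s' - p, by omega⟩ := by
  rw [Matrix.mul_apply]
  split_ifs with h
  · rw [Finset.sum_eq_single (⟨(s : ℕ) + s', h⟩ : Fin p)]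
    · have h3 : ¬ ((s : ℕ) + s' < s') := by omega
      simp only [Rmat, h3, if_false, if_pos rfl, if_true]
      rw [mul_comm]
    · intro k _ hk
      have hk' : (k : ℕ) ≠ (s : ℕ) + s' := fun hc => hk (Fin.ext hc)
      by_cases h4 : (k : ℕ) < s'
      · have h5 : (s : ℕ) ≠ (k : ℕ) + (p - s') := by omega
        simp [Rmat, h4, h5]
      · have h5 : (s : ℕ) + s' ≠ (k : ℕ) := by omega
        simp [Rmat, h4, h5]
    · simp
  · have hk : (s : ℕ) + s' - p < p := by omega
    rw [Finset.sum_eq_single (⟨(s : ℕ) + s' - p, hk⟩ : Fin p)]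
    · have h3 : (s : ℕ) + s' - p < s' := by omega
      have h4 : (s : ℕ) = (s : ℕ) + s' - p + (p - s') := by omega
      simp [Rmat, h3, ← h4]
    · intro k _ hk'
      have hk'' : (k : ℕ) ≠ (s : ℕ) + s' - p := fun hc => hk' (Fin.ext hc)
      by_cases h4 : (k : ℕ) < s'
      · have h5 : (s : ℕ) ≠ (k : ℕ) + (p - s') := by omega
        simp [Rmat, h4, h5]
      · have h5 : (s : ℕ) + s' ≠ (k : ℕ) := by omega
        simp [Rmat, h4, h5]
    · simp

private lemma pow_identity (β : ℝ) (hβ : 0 < β) (a b : ℝ) (p q : ℕ) (hp : 0 < p) (hq : 0 < q)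
    (ha : a = β ^ ((q : ℝ)⁻¹)) (hb : b = β ^ ((p : ℝ)⁻¹)) (i j r s : ℕ) (m : ℤ)
    (hm : (p * i + q * j : ℤ) = p * r + q * s + 1 + p * q * m) :
    a ^ i * b ^ j = β ^ m * (a ^ r * b ^ s * a ^ ((1 : ℝ) / (p : ℝ))) := by
  subst ha hb
  have h1 : ∀ n : ℕ, (β ^ ((q : ℝ)⁻¹)) ^ n = β ^ ((q : ℝ)⁻¹ * n) := fun n => by
    rw [← Real.rpow_natCast (β ^ ((q : ℝ)⁻¹)) n, ← Real.rpow_mul hβ.le]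
  have h2 : ∀ n : ℕ, (β ^ ((p : ℝ)⁻¹)) ^ n = β ^ ((p : ℝ)⁻¹ * n) := fun n => by
    rw [← Real.rpow_natCast (β ^ ((p : ℝ)⁻¹)) n, ← Real.rpow_mul hβ.le]
  rw [h1 i, h2 j, h1 r, h2 s,
    show ((β ^ ((q : ℝ)⁻¹)) ^ ((1 : ℝ) / (p : ℝ)) : ℝ) = β ^ ((q : ℝ)⁻¹ * ((1 : ℝ) / p)) from
      (Real.rpow_mul hβ.le _ _).symm,
    show (β ^ m : ℝ) = β ^ ((m : ℝ) : ℝ) from (Real.rpow_intCast β m).symm,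
    ← Real.rpow_add hβ, ← Real.rpow_add hβ, ← Real.rpow_add hβ, ← Real.rpow_add hβ]
  congr 1
  have hp' : (p : ℝ) ≠ 0 := Nat.cast_ne_zero.2 hp.ne'
  have hq' : (q : ℝ) ≠ 0 := Nat.cast_ne_zero.2 hq.ne'
  have hm' : ((p : ℝ) * i + q * j) = p * r + q * s + 1 + p * q * m := by exact_mod_cast hm
  field_simp
  linear_combination hm'

private lemma scalar1 (C B S T e1 e2 : ℂ) (hC : C ≠ 0) (hB : B ≠ 0) (he : e1 * e2 = 1) :
    S * T = C⁻¹ * (e1 * (B * (S * C) * (B⁻¹ * e2 * T))) := by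
  field_simp
  linear_combination (-(S * T)) * he
private lemma scalar2 (C B S T e1 eL e2 : ℂ) (hC : C ≠ 0) (hB : B ≠ 0)
    (he : e1 * (eL * e2) = 1) :
    S * T = C⁻¹ * (e1 * (eL * (B * (S * C) * (B⁻¹ * e2 * T)))) := by
  field_simp
  linear_combination (-(S * T)) * he
private lemma scalar3 (C B S T e2 : ℂ) (hC : C ≠ 0) (hB : B ≠ 0) (he : e2 = 1) :
    S * T = C⁻¹ * (B * (S * C) * (B⁻¹ * e2 * T)) := by
  subst he; field_simp
private lemma scalar4 (C B S T eL e2 : ℂ) (hC : C ≠ 0) (hB : B ≠ 0) (he : eL * e2 = 1) :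
    S * T = C⁻¹ * (eL * (B * (S * C) * (B⁻¹ * e2 * T))) := by
  field_simp
  linear_combination (-(S * T)) * he

theorem stmt_14 (a b : ℝ) (ha : 1 < a) (hb : 1 < b) (p q : ℕ)
    (hp : 1 < p) (hq : 1 < q) (hco : Nat.Coprime p q)
    (hlog : Real.logb b a = (p : ℝ) / q) (β : ℝ) (hβ : β = b ^ p)
    (ψ : ℝ → ℂ) (hψ : MemLp ψ 2 (volume.restrict (Ioi (0 : ℝ))))
    (r' s' : ℕ) (hr' : 1 ≤ r' ∧ r' ≤ q - 1) (hs' : 1 ≤ s' ∧ s' ≤ p - 1)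
    (hrs : p * r' + q * s' = p * q + 1) :
    ∀ᵐ z ∂((volume : Measure (ℝ × ℝ)).restrict (Ioi (0 : ℝ) ×ˢ (univ : Set ℝ))),
      psiMatrix a b β p q ψ (a ^ ((1 : ℝ) / p) * z.1) z.2 =
        (((a ^ ((1 : ℝ) / (2 * p)) : ℝ) : ℂ))⁻¹ •
          (Lmat q r' z.2 * psiMatrix a b β p q ψ z.1 z.2 * Rmat p s' z.2) := by
  have ha0 : (0:ℝ) < a := lt_trans zero_lt_one ha
  have hb0 : (0:ℝ) < b := lt_trans zero_lt_one hb
  have hβ0 : 0 < β := hβ ▸ pow_pos hb0 p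
  have hlb : 0 < Real.log b := Real.log_pos hb
  have hq0 : (q:ℝ) ≠ 0 := Nat.cast_ne_zero.2 (by omega)
  have hlog' : Real.log a * q = p * Real.log b := by
    rw [Real.logb, div_eq_div_iff hlb.ne' hq0] at hlog
    exact hlog
  have haq : a ^ q = b ^ p := by
    have h1 : Real.log (a ^ q) = Real.log (b ^ p) := by
      rw [Real.log_pow, Real.log_pow]; push_cast; linarith
    calc a ^ q = Real.exp (Real.log (a ^ q)) := (Real.exp_log (pow_pos ha0 q)).symm
      _ = Real.exp (Real.log (b ^ p)) := by rw [h1]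
      _ = b ^ p := Real.exp_log (pow_pos hb0 p)
  have hβa : β = a ^ q := by rw [hβ, ← haq]
  have ha_eq : a = β ^ ((q : ℝ)⁻¹) := by
    rw [hβa]; exact (Real.pow_rpow_inv_natCast ha0.le (by omega)).symm
  have hb_eq : b = β ^ ((p : ℝ)⁻¹) := by
    rw [hβ]; exact (Real.pow_rpow_inv_natCast hb0.le (by omega)).symm
  have hroot : Real.sqrt (a ^ ((1:ℝ)/(p:ℝ))) = a ^ ((1:ℝ)/(2*(p:ℝ))) := by
    rw [Real.sqrt_eq_rpow, ← Real.rpow_mul ha0.le]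
    congr 1; field_simp
  have hrs' : ((p : ℤ) * r' + q * s' : ℤ) = p * q + 1 := by exact_mod_cast hrs
  have hC : ((a ^ ((1 : ℝ) / (2 * (p : ℝ))) : ℝ) : ℂ) ≠ 0 := by
    simpa using (Real.rpow_pos_of_pos ha0 _).ne'
  refine Filter.Eventually.of_forall fun z => ?_
  obtain ⟨x, ξ⟩ := z
  ext r s
  simp only [Matrix.smul_apply, smul_eq_mul]
  rw [mulR hs'.1 hs'.2 hp ξ]
  by_cases hsc : (s : ℕ) + s' < p
  · rw [dif_pos hsc, Lmul hr'.1 hr'.2 hq ξ]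
    by_cases hrc : (r : ℕ) + r' < q
    · rw [dif_pos hrc]
      simp only [psiMatrix]
      have hpow := pow_identity β hβ0 a b p q (by omega) (by omega) ha_eq hb_eq
        ((r : ℕ) + r') ((s : ℕ) + s') r s (1) (by
          push_cast; linear_combination hrs')
      have harg : a ^ ((r : ℕ) + r') * b ^ ((s : ℕ) + s') * x
          = β ^ (1 : ℤ) * (a ^ (r : ℕ) * b ^ (s : ℕ) * (a ^ ((1 : ℝ) / p) * x)) := by
        rw [hpow]; ring
      rw [harg, theta_shift β hβ0 ψ _ ξ (1)]
      have hsqrt : Real.sqrt (a ^ ((r : ℕ) + r') * b ^ ((s : ℕ) + s'))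
          = Real.sqrt (β ^ (1 : ℤ)) * (Real.sqrt (a ^ (r : ℕ) * b ^ (s : ℕ)) *
            a ^ ((1 : ℝ) / (2 * (p : ℝ)))) := by
        rw [hpow, Real.sqrt_mul (zpow_pos hβ0 (1)).le,
          Real.sqrt_mul (mul_pos (pow_pos ha0 (r : ℕ)) (pow_pos hb0 (s : ℕ))).le, hroot]
      have hsqrtC : ((Real.sqrt (a ^ ((r : ℕ) + r') * b ^ ((s : ℕ) + s')) : ℝ) : ℂ)
          = ((Real.sqrt (β ^ (1 : ℤ)) : ℝ) : ℂ) * (((Real.sqrt (a ^ (r : ℕ) * b ^ (s : ℕ)) : ℝ) : ℂ) *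
            ((a ^ ((1 : ℝ) / (2 * (p : ℝ))) : ℝ) : ℂ)) := by
        rw [hsqrt, Complex.ofReal_mul, Complex.ofReal_mul]
      rw [hsqrtC]
      have hB : ((Real.sqrt (β ^ (1 : ℤ)) : ℝ) : ℂ) ≠ 0 := by
        simpa using (Real.sqrt_pos.2 (zpow_pos hβ0 (1))).ne'
      have he : Complex.exp (-(2 * (Real.pi : ℝ) * Complex.I * (ξ : ℂ))) * Complex.exp (2 * (Real.pi : ℝ) * Complex.I * ((1 : ℤ) : ℂ) * (ξ : ℂ)) = 1 := by
        rw [← Complex.exp_add, show -(2 * ((Real.pi : ℝ) : ℂ) * Complex.I * (ξ : ℂ)) +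
          2 * ((Real.pi : ℝ) : ℂ) * Complex.I * (((1 : ℤ)) : ℂ) * (ξ : ℂ) = 0 by push_cast; ring]
        exact Complex.exp_zero
      exact scalar1 _ _ _ _ _ _ hC hB he
    · rw [dif_neg hrc]
      simp only [psiMatrix]
      have hpow := pow_identity β hβ0 a b p q (by omega) (by omega) ha_eq hb_eq
        ((r : ℕ) + r' - q) ((s : ℕ) + s') r s (0) (by
          push_cast [Nat.cast_sub (le_of_not_gt hrc)]; linear_combination hrs')
      have harg : a ^ ((r : ℕ) + r' - q) * b ^ ((s : ℕ) + s') * x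
          = β ^ (0 : ℤ) * (a ^ (r : ℕ) * b ^ (s : ℕ) * (a ^ ((1 : ℝ) / p) * x)) := by
        rw [hpow]; ring
      rw [harg, theta_shift β hβ0 ψ _ ξ (0)]
      have hsqrt : Real.sqrt (a ^ ((r : ℕ) + r' - q) * b ^ ((s : ℕ) + s'))
          = Real.sqrt (β ^ (0 : ℤ)) * (Real.sqrt (a ^ (r : ℕ) * b ^ (s : ℕ)) *
            a ^ ((1 : ℝ) / (2 * (p : ℝ)))) := by
        rw [hpow, Real.sqrt_mul (zpow_pos hβ0 (0)).le,
          Real.sqrt_mul (mul_pos (pow_pos ha0 (r : ℕ)) (pow_pos hb0 (s : ℕ))).le, hroot]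
      have hsqrtC : ((Real.sqrt (a ^ ((r : ℕ) + r' - q) * b ^ ((s : ℕ) + s')) : ℝ) : ℂ)
          = ((Real.sqrt (β ^ (0 : ℤ)) : ℝ) : ℂ) * (((Real.sqrt (a ^ (r : ℕ) * b ^ (s : ℕ)) : ℝ) : ℂ) *
            ((a ^ ((1 : ℝ) / (2 * (p : ℝ))) : ℝ) : ℂ)) := by
        rw [hsqrt, Complex.ofReal_mul, Complex.ofReal_mul]
      rw [hsqrtC]
      have hB : ((Real.sqrt (β ^ (0 : ℤ)) : ℝ) : ℂ) ≠ 0 := by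
        simpa using (Real.sqrt_pos.2 (zpow_pos hβ0 (0))).ne'
      have he : Complex.exp (-(2 * (Real.pi : ℝ) * Complex.I * (ξ : ℂ))) * (Complex.exp (2 * (Real.pi : ℝ) * Complex.I * (ξ : ℂ)) * Complex.exp (2 * (Real.pi : ℝ) * Complex.I * ((0 : ℤ) : ℂ) * (ξ : ℂ))) = 1 := by
        rw [← Complex.exp_add, ← Complex.exp_add, show -(2 * ((Real.pi : ℝ) : ℂ) * Complex.I * (ξ : ℂ)) +
          (2 * ((Real.pi : ℝ) : ℂ) * Complex.I * (ξ : ℂ) +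
           2 * ((Real.pi : ℝ) : ℂ) * Complex.I * (((0 : ℤ)) : ℂ) * (ξ : ℂ)) = 0 by push_cast; ring]
        exact Complex.exp_zero
      exact scalar2 _ _ _ _ _ _ _ hC hB he
  · rw [dif_neg hsc, Lmul hr'.1 hr'.2 hq ξ]
    by_cases hrc : (r : ℕ) + r' < q
    · rw [dif_pos hrc]
      simp only [psiMatrix]
      have hpow := pow_identity β hβ0 a b p q (by omega) (by omega) ha_eq hb_eq
        ((r : ℕ) + r') ((s : ℕ) + s' - p) r s (0) (by
          push_cast [Nat.cast_sub (le_of_not_gt hsc)]; linear_combination hrs')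
      have harg : a ^ ((r : ℕ) + r') * b ^ ((s : ℕ) + s' - p) * x
          = β ^ (0 : ℤ) * (a ^ (r : ℕ) * b ^ (s : ℕ) * (a ^ ((1 : ℝ) / p) * x)) := by
        rw [hpow]; ring
      rw [harg, theta_shift β hβ0 ψ _ ξ (0)]
      have hsqrt : Real.sqrt (a ^ ((r : ℕ) + r') * b ^ ((s : ℕ) + s' - p))
          = Real.sqrt (β ^ (0 : ℤ)) * (Real.sqrt (a ^ (r : ℕ) * b ^ (s : ℕ)) *
            a ^ ((1 : ℝ) / (2 * (p : ℝ)))) := by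
        rw [hpow, Real.sqrt_mul (zpow_pos hβ0 (0)).le,
          Real.sqrt_mul (mul_pos (pow_pos ha0 (r : ℕ)) (pow_pos hb0 (s : ℕ))).le, hroot]
      have hsqrtC : ((Real.sqrt (a ^ ((r : ℕ) + r') * b ^ ((s : ℕ) + s' - p)) : ℝ) : ℂ)
          = ((Real.sqrt (β ^ (0 : ℤ)) : ℝ) : ℂ) * (((Real.sqrt (a ^ (r : ℕ) * b ^ (s : ℕ)) : ℝ) : ℂ) *
            ((a ^ ((1 : ℝ) / (2 * (p : ℝ))) : ℝ) : ℂ)) := by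
        rw [hsqrt, Complex.ofReal_mul, Complex.ofReal_mul]
      rw [hsqrtC]
      have hB : ((Real.sqrt (β ^ (0 : ℤ)) : ℝ) : ℂ) ≠ 0 := by
        simpa using (Real.sqrt_pos.2 (zpow_pos hβ0 (0))).ne'
      have he : Complex.exp (2 * (Real.pi : ℝ) * Complex.I * ((0 : ℤ) : ℂ) * (ξ : ℂ)) = 1 := by
        rw [show 2 * ((Real.pi : ℝ) : ℂ) * Complex.I * (((0 : ℤ)) : ℂ) * (ξ : ℂ) = 0 by push_cast; ring]
        exact Complex.exp_zero
      exact scalar3 _ _ _ _ _ hC hB he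
    · rw [dif_neg hrc]
      simp only [psiMatrix]
      have hpow := pow_identity β hβ0 a b p q (by omega) (by omega) ha_eq hb_eq
        ((r : ℕ) + r' - q) ((s : ℕ) + s' - p) r s (-1) (by
          push_cast [Nat.cast_sub (le_of_not_gt hrc), Nat.cast_sub (le_of_not_gt hsc)]; linear_combination hrs')
      have harg : a ^ ((r : ℕ) + r' - q) * b ^ ((s : ℕ) + s' - p) * x
          = β ^ (-1 : ℤ) * (a ^ (r : ℕ) * b ^ (s : ℕ) * (a ^ ((1 : ℝ) / p) * x)) := by
        rw [hpow]; ring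
      rw [harg, theta_shift β hβ0 ψ _ ξ (-1)]
      have hsqrt : Real.sqrt (a ^ ((r : ℕ) + r' - q) * b ^ ((s : ℕ) + s' - p))
          = Real.sqrt (β ^ (-1 : ℤ)) * (Real.sqrt (a ^ (r : ℕ) * b ^ (s : ℕ)) *
            a ^ ((1 : ℝ) / (2 * (p : ℝ)))) := by
        rw [hpow, Real.sqrt_mul (zpow_pos hβ0 (-1)).le,
          Real.sqrt_mul (mul_pos (pow_pos ha0 (r : ℕ)) (pow_pos hb0 (s : ℕ))).le, hroot]
      have hsqrtC : ((Real.sqrt (a ^ ((r : ℕ) + r' - q) * b ^ ((s : ℕ) + s' - p)) : ℝ) : ℂ)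
          = ((Real.sqrt (β ^ (-1 : ℤ)) : ℝ) : ℂ) * (((Real.sqrt (a ^ (r : ℕ) * b ^ (s : ℕ)) : ℝ) : ℂ) *
            ((a ^ ((1 : ℝ) / (2 * (p : ℝ))) : ℝ) : ℂ)) := by
        rw [hsqrt, Complex.ofReal_mul, Complex.ofReal_mul]
      rw [hsqrtC]
      have hB : ((Real.sqrt (β ^ (-1 : ℤ)) : ℝ) : ℂ) ≠ 0 := by
        simpa using (Real.sqrt_pos.2 (zpow_pos hβ0 (-1))).ne'
      have he : Complex.exp (2 * (Real.pi : ℝ) * Complex.I * (ξ : ℂ)) * Complex.exp (2 * (Real.pi : ℝ) * Complex.I * ((-1 : ℤ) : ℂ) * (ξ : ℂ)) = 1 := by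
        rw [← Complex.exp_add, show 2 * ((Real.pi : ℝ) : ℂ) * Complex.I * (ξ : ℂ) +
          2 * ((Real.pi : ℝ) : ℂ) * Complex.I * (((-1 : ℤ)) : ℂ) * (ξ : ℂ) = 0 by push_cast; ring]
        exact Complex.exp_zero
      exact scalar4 _ _ _ _ _ _ hC hB he
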